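/- Let k ≥ 1 be an integer, let G be a finite connected graph containing a cycle, and let C be a shortest cycle in G (a cycle whose length equals the girth of G). If v is a vertex of G not lying on C such that at least 2k vertices of C are at distance at most k from v in G, then there exist two vertices u and w on C, each at distance at most k from v in G, such that some shortest path in G between u and v does not contain w, and some shortest path in G between v and w does not contain u. -/

import Mathlib

/-! Auxiliary machinery for the main theorem. -/

/-- circular norm of an integer mod `g`. -/
def normc (g : ℕ) (e : ℤ) : ℕ := min ((e % g).toNat) ((-e % g).toNat)

section Circ
variable {g : ℕ}

lemma normc_neg (g : ℕ) (e : ℤ) : normc g (-e) = normc g e := by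
  simp [normc, min_comm]

lemma normc_zero (g : ℕ) : normc g 0 = 0 := by simp [normc]

lemma normc_le_nonneg (hg : 0 < g) {e m : ℤ} (hm : 0 ≤ m) (h : m % g = e % g) :
    normc g e ≤ m.natAbs := by
  have hg' : (0:ℤ) < g := by exact_mod_cast hg
  have h1 : e % g ≤ m := by
    rw [← h]
    have := Int.mul_ediv_add_emod m g
    have h2 : 0 ≤ (g:ℤ) * (m / g) := mul_nonneg hg'.le (Int.ediv_nonneg hm hg'.le)
    omega
  calc normc g e ≤ (e % g).toNat := min_le_left _ _
    _ ≤ m.natAbs := by omega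

lemma normc_le (hg : 0 < g) {e m : ℤ} (h : m % g = e % g ∨ m % g = (-e) % g) :
    normc g e ≤ m.natAbs := by
  rcases le_or_gt 0 m with hm | hm
  · rcases h with h | h
    · exact normc_le_nonneg hg hm h
    · rw [← normc_neg g e]; exact normc_le_nonneg hg hm h
  · have hm' : 0 ≤ -m := by omega
    have key : ∀ a b : ℤ, a % g = b % g → (-a) % g = (-b) % g := fun a b hab =>
      Int.ModEq.neg hab
    rcases h with h | h
    · rw [← normc_neg g e, ← Int.natAbs_neg]
      exact normc_le_nonneg hg hm' (key _ _ h)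
    · rw [← Int.natAbs_neg]
      refine normc_le_nonneg hg hm' ?_
      have := key _ _ h
      simpa using this

lemma normc_exists (hg : 0 < g) (e : ℤ) :
    ∃ m : ℤ, m % g = e % g ∧ m.natAbs = normc g e := by
  have hg' : (0:ℤ) < g := by exact_mod_cast hg
  rcases le_total ((e % g).toNat) ((-e % g).toNat) with h | h
  · refine ⟨e % g, Int.emod_emod_of_dvd _ dvd_rfl, ?_⟩
    have := Int.emod_nonneg e (by omega : (g:ℤ) ≠ 0)
    simp [normc, min_eq_left h]
    omega
  · refine ⟨-((-e) % g), ?_, ?_⟩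
    · have h1 : ((-e) % g) % g = (-e) % g := Int.emod_emod_of_dvd _ dvd_rfl
      have h2 : (-((-e) % g)) % g = (-(-e)) % g := Int.ModEq.neg h1
      simpa using h2
    · have := Int.emod_nonneg (-e) (by omega : (g:ℤ) ≠ 0)
      simp [normc, min_eq_right h]
      omega

lemma normc_add_le (hg : 0 < g) (e₁ e₂ : ℤ) :
    normc g (e₁ + e₂) ≤ normc g e₁ + normc g e₂ := by
  obtain ⟨m₁, hm₁, hn₁⟩ := normc_exists hg e₁
  obtain ⟨m₂, hm₂, hn₂⟩ := normc_exists hg e₂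
  have : (m₁ + m₂) % g = (e₁ + e₂) % g := Int.ModEq.add hm₁ hm₂
  calc normc g (e₁ + e₂) ≤ (m₁ + m₂).natAbs := normc_le hg (Or.inl this)
    _ ≤ m₁.natAbs + m₂.natAbs := Int.natAbs_add_le _ _
    _ = _ := by rw [hn₁, hn₂]

lemma normc_eq_min {t₁ t₂ : ℕ} (hg : 0 < g) (e : ℤ) (ht₁ : t₁ < g) (ht₂ : t₂ < g)
    (h₁ : (t₁ : ℤ) % g = e % g) (h₂ : (t₂ : ℤ) % g = (-e) % g) :
    normc g e = min t₁ t₂ := by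
  have e₁ : (t₁ : ℤ) % g = t₁ := Int.emod_eq_of_lt (by positivity) (by exact_mod_cast ht₁)
  have e₂ : (t₂ : ℤ) % g = t₂ := Int.emod_eq_of_lt (by positivity) (by exact_mod_cast ht₂)
  rw [normc, ← h₁, ← h₂, e₁, e₂]
  omega

end Circ

namespace List
variable {α : Type*} [DecidableEq α]

theorem indexOf_rotate_mod {l : List α} (hnd : l.Nodup) (m : ℕ) {x : α} (hx : x ∈ l) :
    ((l.rotate m).idxOf x + m) % l.length = l.idxOf x := by
  have hn : 0 < l.length := length_pos_iff.mpr (ne_nil_of_mem hx)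
  have hx' : x ∈ l.rotate m := (mem_rotate).mpr hx
  have hi : (l.rotate m).idxOf x < (l.rotate m).length := idxOf_lt_length_iff.mpr hx'
  set i := (l.rotate m).idxOf x with hidef
  have h1 : (l.rotate m)[i]'hi = x := getElem_idxOf hi
  have h2 : (l.rotate m)[i]'hi = l[(i + m) % l.length]'(Nat.mod_lt _ hn) :=
    getElem_rotate l m i hi
  have h3 : l[(i + m) % l.length]'(Nat.mod_lt _ hn) = x := by rw [← h2, h1]
  have h4 := Nodup.idxOf_getElem hnd ((i + m) % l.length) (Nat.mod_lt _ hn)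
  rw [h3] at h4
  exact h4.symm

theorem indexOf_getLast {l : List α} (hnd : l.Nodup) (hne : l ≠ []) :
    l.idxOf (l.getLast hne) = l.length - 1 := by
  have hn : 0 < l.length := length_pos_iff.mpr hne
  have h1 : l.getLast hne = l[l.length - 1]'(by omega) := getLast_eq_getElem hne
  rw [h1]
  exact Nodup.idxOf_getElem hnd _ _

end List

namespace SimpleGraph
namespace Walk
variable {V : Type*} {G : SimpleGraph V} [DecidableEq V]

theorem length_takeUntil_eq_indexOf {u v w : V} (p : G.Walk v w) (h : u ∈ p.support) :
    (p.takeUntil u h).length = p.support.idxOf u := by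
  induction p with
  | nil =>
    rw [mem_support_nil_iff] at h
    subst u
    simp!
  | cons r p ih =>
    rename_i v' w' x'
    by_cases hvu : v' = u
    · subst hvu
      simp! [List.idxOf_cons_self]
    · have h' : u ∈ p.support := by
        cases h with
        | head => exact absurd rfl hvu
        | tail _ h' => exact h'
      simp! only [Walk.takeUntil]
      rw [dif_neg hvu]
      simp only [length_cons, support_cons]
      rw [List.idxOf_cons_ne _ hvu, ih h']

theorem length_takeUntil_add_dropUntil {u v w : V} (p : G.Walk v w) (h : u ∈ p.support) :
    (p.takeUntil u h).length + (p.dropUntil u h).length = p.length := by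
  have := congrArg Walk.length (p.take_spec h)
  rwa [length_append] at this

theorem length_rotate' {v u : V} (c : G.Walk v v) (h : u ∈ c.support) :
    (c.rotate u h).length = c.length := by
  rw [rotate, length_append, add_comm, length_takeUntil_add_dropUntil]

theorem end_not_mem_support_takeUntil {u v w : V} {p : G.Walk v w} (hp : p.IsPath)
    (h : u ∈ p.support) (huw : u ≠ w) : w ∉ (p.takeUntil u h).support := by
  intro hw
  have hsp := hp.support_nodup
  rw [← take_spec p h] at hsp
  rw [support_append] at hsp
  have hdisj := (List.nodup_append.mp hsp).2.2
  have hw2 : w ∈ (p.dropUntil u h).support.tail := by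
    have : w ∈ (p.dropUntil u h).support := end_mem_support _
    rw [support_eq_cons] at this
    cases this with
    | head => exact absurd rfl huw.symm
    | tail _ h2 => exact h2
  exact hdisj w hw w hw2 rfl

theorem IsCycle.isPath_takeUntil' {v u : V} {c : G.Walk v v} (hc : c.IsCycle)
    (h : u ∈ c.support) : (c.takeUntil u h).IsPath := by
  cases c with
  | nil => exact absurd rfl hc.ne_nil
  | cons r q =>
    rename_i w'
    by_cases hvu : v = u
    · subst hvu
      simp! [Walk.IsPath.nil]
    · have hq : q.IsPath := (cons_isCycle_iff q r).mp hc |>.1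
      have h' : u ∈ q.support := by
        cases h with
        | head => exact absurd rfl hvu
        | tail _ h' => exact h'
      simp! only [Walk.takeUntil]
      rw [dif_neg hvu]
      rw [cons_isPath_iff]
      exact ⟨hq.takeUntil h', end_not_mem_support_takeUntil hq h' (fun e => hvu e.symm)⟩

omit [DecidableEq V] in
theorem tail_support_length {v : V} (c : G.Walk v v) :
    c.support.tail.length = c.length := by
  have h1 := length_support c
  have h2 : c.support.tail.length = c.support.length - 1 := List.length_tail
  omega

omit [DecidableEq V] in
theorem mem_tail_support_of_mem_support {v u : V} {c : G.Walk v v} (hlen : c.length ≠ 0)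
    (h : u ∈ c.support) : u ∈ c.support.tail := by
  have htl : c.support.tail.length = c.length := tail_support_length c
  have hne : c.support.tail ≠ [] := by
    intro he
    rw [he] at htl
    simp at htl
    exact hlen htl.symm
  have hlast : c.support.tail.getLast hne = v := by
    rw [List.getLast_tail]
    exact getLast_support c
  rw [support_eq_cons] at h
  cases h with
  | head =>
    have := List.getLast_mem hne
    rwa [hlast] at this
  | tail _ h2 => exact h2

theorem mem_support_rotate_iff' {v u x : V} (c : G.Walk v v) (hlen : c.length ≠ 0)
    (h : u ∈ c.support) : x ∈ (c.rotate u h).support ↔ x ∈ c.support := by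
  have hlen' : (c.rotate u h).length ≠ 0 := by rwa [length_rotate']
  have hrot := support_rotate c u h
  constructor
  · intro hx
    have := mem_tail_support_of_mem_support hlen' hx
    rw [hrot.mem_iff] at this
    exact List.mem_of_mem_tail this
  · intro hx
    have := mem_tail_support_of_mem_support hlen hx
    rw [← hrot.mem_iff] at this
    exact List.mem_of_mem_tail this

theorem exists_arc {v x y : V} {c : G.Walk v v} (hc : c.IsCycle)
    (hx : x ∈ c.support) (hy : y ∈ c.support) (hxy : x ≠ y) :
    ∃ A : G.Walk y x, A.IsPath ∧ (∀ z ∈ A.support, z ∈ c.support) ∧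
      1 ≤ A.length ∧ A.length < c.length ∧
      (A.length : ℤ) % (c.length : ℤ) =
        ((c.support.tail.idxOf x : ℤ) - (c.support.tail.idxOf y : ℤ))
          % (c.length : ℤ) := by
  have hg3 : 3 ≤ c.length := hc.three_le_length
  have hgne : c.length ≠ 0 := by omega
  have hLnd : c.support.tail.Nodup := hc.support_nodup
  have hLlen : c.support.tail.length = c.length := tail_support_length c
  set d := c.rotate y hy with hddef
  have hd : d.IsCycle := hc.rotate hy
  have hdlen : d.length = c.length := length_rotate' c hy
  have hdne : d.length ≠ 0 := by omega
  have hx' : x ∈ d.support := (mem_support_rotate_iff' c hgne hy).mpr hx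
  have hDnd : d.support.tail.Nodup := hd.support_nodup
  have hDlen : d.support.tail.length = c.length := by
    rw [tail_support_length d, hdlen]
  have hxD : x ∈ d.support.tail := mem_tail_support_of_mem_support hdne hx'
  have hDne : d.support.tail ≠ [] := List.ne_nil_of_mem hxD
  have hyD : y ∈ d.support.tail := mem_tail_support_of_mem_support hdne (start_mem_support d)
  set j := d.support.tail.idxOf x with hjdef
  have hjlt : j < c.length := by
    have := List.idxOf_lt_length_iff.mpr hxD
    omega
  have hlast : d.support.tail.getLast hDne = y := by
    rw [List.getLast_tail]
    exact getLast_support d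
  have hyidx : d.support.tail.idxOf y = c.length - 1 := by
    have h := List.indexOf_getLast hDnd hDne
    rw [hlast, hDlen] at h
    exact h
  have hjne : j ≠ c.length - 1 := by
    intro hcontra
    have : j = d.support.tail.idxOf y := by rw [hyidx, hcontra]
    exact hxy (List.idxOf_inj hxD |>.mp (hjdef ▸ this))
  have hlen : (d.takeUntil x hx').length = j + 1 := by
    rw [length_takeUntil_eq_indexOf d hx']
    rw [support_eq_cons d]
    exact List.idxOf_cons_ne _ (fun e => hxy e.symm)
  obtain ⟨m, hm⟩ := (support_rotate c y hy).symm
  have hx5 : (j + m) % c.length = c.support.tail.idxOf x := by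
    have := List.indexOf_rotate_mod hLnd m
      (mem_tail_support_of_mem_support hgne hx)
    rw [hm, hLlen] at this
    exact this
  have hy5 : (c.length - 1 + m) % c.length = c.support.tail.idxOf y := by
    have := List.indexOf_rotate_mod hLnd m
      (mem_tail_support_of_mem_support hgne hy)
    rw [hm, hLlen, hyidx] at this
    exact this
  refine ⟨d.takeUntil x hx', hd.isPath_takeUntil hx',
    fun z hz => (mem_support_rotate_iff' c hgne hy).mp (support_takeUntil_subset d hx' hz),
    by omega, by omega, ?_⟩
  rw [hlen]
  have e1 : (c.support.tail.idxOf x : ℤ) = ((j : ℤ) + m) % (c.length : ℤ) := by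
    rw [← hx5]
    push_cast [Int.natCast_mod]
    ring_nf
  have e2 : (c.support.tail.idxOf y : ℤ) = ((c.length : ℤ) - 1 + m) % (c.length : ℤ) := by
    rw [← hy5]
    push_cast [Int.natCast_mod, Nat.cast_sub (by omega : 1 ≤ c.length)]
    ring_nf
  rw [e1, e2, ← Int.sub_emod]
  have e3 : ((j : ℤ) + m) - ((c.length : ℤ) - 1 + m) = ((j : ℤ) + 1) - c.length := by ring
  rw [e3, Int.sub_emod_right]
  push_cast
  ring_nf

theorem key_path {v : V} {c : G.Walk v v} (hc : c.IsCycle)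
    (hmin : ∀ (b : V) (w : G.Walk b b), w.IsCycle → c.length ≤ w.length) (n : ℕ) :
    ∀ {x y : V}, x ∈ c.support → y ∈ c.support → ∀ (p : G.Walk x y),
      p.IsPath → p.length ≤ n →
      normc c.length ((c.support.tail.idxOf y : ℤ) - (c.support.tail.idxOf x : ℤ))
        ≤ p.length := by
  have hg3 : 3 ≤ c.length := hc.three_le_length
  have hgpos : 0 < c.length := by omega
  induction n with
  | zero =>
    intro x y hx hy p hp hlen
    have hxy : x = y := eq_of_length_eq_zero (p := p) (by omega)
    subst hxy
    simp [sub_self, normc_zero]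
  | succ n ih =>
    intro x y hx hy p hp hlen
    by_cases hxy : x = y
    · subst hxy
      simp [sub_self, normc_zero]
    by_cases hsplit : ∃ z ∈ p.support, z ∈ c.support ∧ z ≠ x ∧ z ≠ y
    · obtain ⟨z, hzp, hzc, hzx, hzy⟩ := hsplit
      have hsum : (p.takeUntil z hzp).length + (p.dropUntil z hzp).length = p.length :=
        length_takeUntil_add_dropUntil p hzp
      have hp₁ : (p.takeUntil z hzp).IsPath := hp.takeUntil hzp
      have hp₂ : (p.dropUntil z hzp).IsPath := hp.dropUntil hzp
      have h₁pos : (p.takeUntil z hzp).length ≠ 0 := fun h =>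
        hzx (eq_of_length_eq_zero h).symm
      have h₂pos : (p.dropUntil z hzp).length ≠ 0 := fun h =>
        hzy (eq_of_length_eq_zero h)
      have r₁ := ih hx hzc (p.takeUntil z hzp) hp₁ (by omega)
      have r₂ := ih hzc hy (p.dropUntil z hzp) hp₂ (by omega)
      have e : (c.support.tail.idxOf y : ℤ) - (c.support.tail.idxOf x : ℤ) =
          ((c.support.tail.idxOf z : ℤ) - (c.support.tail.idxOf x : ℤ)) +
          ((c.support.tail.idxOf y : ℤ) - (c.support.tail.idxOf z : ℤ)) := by ring
      rw [e]
      calc normc c.length _ ≤ _ := normc_add_le hgpos _ _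
        _ ≤ (p.takeUntil z hzp).length + (p.dropUntil z hzp).length := add_le_add r₁ r₂
        _ = p.length := hsum
    · push_neg at hsplit
      by_contra hcon
      push_neg at hcon
      have hppos : 1 ≤ p.length := by
        rcases Nat.eq_zero_or_pos p.length with h | h
        · exact absurd (eq_of_length_eq_zero h) hxy
        · omega
      obtain ⟨A, hApath, hAsub, hA1, hAlt, hAmod⟩ := exists_arc hc hx hy hxy
      obtain ⟨B, hBpath, hBsub, hB1, hBlt, hBmod⟩ := exists_arc hc hy hx (Ne.symm hxy)
      set e := ((c.support.tail.idxOf y : ℤ) - (c.support.tail.idxOf x : ℤ)) with hedef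
      have hAmod' : (A.length : ℤ) % (c.length : ℤ) = (-e) % (c.length : ℤ) := by
        rw [hAmod]; congr 1; ring
      have hmineq : normc c.length e = min B.length A.length :=
        normc_eq_min hgpos e hBlt hAlt hBmod hAmod'
      rw [hmineq] at hcon
      have hpB : p.length < B.length := by omega
      have hpA : p.length < A.length := by omega
      have hsumg : B.length + A.length = c.length := by
        have h0 : ((B.length : ℤ) + (A.length : ℤ)) % (c.length : ℤ) = 0 := by
          have h := Int.ModEq.add (Int.ModEq.symm hBmod) (Int.ModEq.symm hAmod)
          have h1 : e + ((c.support.tail.idxOf x : ℤ) - (c.support.tail.idxOf y : ℤ)) = 0 := by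
            rw [hedef]; ring
          unfold Int.ModEq at h
          rw [h1] at h
          simpa using h.symm
        have hd : c.length ∣ (B.length + A.length) := by
          have := Int.dvd_of_emod_eq_zero h0
          exact_mod_cast Int.natCast_dvd_natCast.mp (by exact_mod_cast this)
        have hge : c.length ≤ B.length + A.length := Nat.le_of_dvd (by omega) hd
        have hd2 : c.length ∣ (B.length + A.length - c.length) := Nat.dvd_sub hd dvd_rfl
        have hlt2 : B.length + A.length - c.length < c.length := by omega
        rcases Nat.eq_zero_or_pos (B.length + A.length - c.length) with h | h
        · omega
        · exact absurd hd2 (fun hdd => by have := Nat.le_of_dvd h hdd; omega)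
      cases A with
      | nil => simp at hA1
      | @cons _ y₂ _ h2 A' =>
        rw [cons_isPath_iff] at hApath
        obtain ⟨hA'path, hyA'⟩ := hApath
        have hxtail : x ∉ p.support.tail := by
          have hnd := hp.support_nodup
          rw [support_eq_cons] at hnd
          exact (List.nodup_cons.mp hnd).1
        have hpathW : (A'.append p).IsPath := by
          rw [isPath_def, support_append]
          apply List.Nodup.append hA'path.support_nodup hp.support_nodup.tail
          intro z hz1 hz2
          have hzc : z ∈ c.support := hAsub z (by
            rw [support_cons]; exact List.mem_cons_of_mem _ hz1)
          have hzp : z ∈ p.support := List.mem_of_mem_tail hz2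
          by_cases hzx : z = x
          · subst hzx; exact hxtail hz2
          · have hzy := hsplit z hzp hzc hzx
            subst hzy
            exact hyA' hz1
        have hedge : s(y, y₂) ∉ (A'.append p).edges := by
          intro hmem
          rw [edges_append, List.mem_append] at hmem
          rcases hmem with hmem | hmem
          · exact hyA' (fst_mem_support_of_mem_edges A' hmem)
          · have hy₂p : y₂ ∈ p.support := snd_mem_support_of_mem_edges p hmem
            have hy₂c : y₂ ∈ c.support := hAsub y₂ (by
              rw [support_cons]; exact List.mem_cons_of_mem _ (start_mem_support A'))
            by_cases hy₂x : y₂ = x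
            · subst hy₂x
              have hnil : A' = nil := isPath_iff_eq_nil.mp hA'path
              rw [hnil] at hpA
              simp only [length_cons, length_nil] at hpA
              omega
            · have hy₂y := hsplit y₂ hy₂p hy₂c hy₂x
              subst hy₂y
              exact hyA' (start_mem_support A')
        have hWcycle : (Walk.cons h2 (A'.append p)).IsCycle :=
          (cons_isCycle_iff _ h2).mpr ⟨hpathW, hedge⟩
        have hmin2 := hmin y _ hWcycle
        have hlenW : (Walk.cons h2 (A'.append p)).length = A'.length + p.length + 1 := by
          rw [length_cons, length_append]
        have hAlen : (Walk.cons h2 A').length = A'.length + 1 := length_cons _ _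
        omega

end Walk
end SimpleGraph
lemma neg_emod_eq {g : ℕ} (hg : 0 < g) (e : ℤ) :
    (-e) % (g:ℤ) = if e % (g:ℤ) = 0 then 0 else (g:ℤ) - e % g := by
  have hgz : (0:ℤ) < g := by exact_mod_cast hg
  have h1 : (e % g) % (g:ℤ) = e % g := Int.emod_emod_of_dvd _ dvd_rfl
  have h2 : (-(e % g)) % (g:ℤ) = (-e) % g := Int.ModEq.neg h1
  have hr0 : 0 ≤ e % (g:ℤ) := Int.emod_nonneg _ (by omega)
  have hrg : e % (g:ℤ) < g := Int.emod_lt_of_pos _ hgz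
  rw [← h2]
  by_cases h0 : e % (g:ℤ) = 0
  · rw [if_pos h0, h0]
    simp
  · rw [if_neg h0]
    rw [Int.emod_eq_add_self_emod]
    have h3 : -(e % (g:ℤ)) + g = g - e % g := by ring
    rw [h3]
    exact Int.emod_eq_of_lt (by omega) (by omega)

/-- Let `C` be a shortest cycle in a finite connected graph `G` (a cycle whose length
equals the girth).  If `v` is a vertex not on `C` that `k`-dominates at least `2k`
vertices of `C`, then there are vertices `u, w` on `C`, both within distance `k` of `v`,
such that some shortest `u-v` path avoids `w` and some shortest `v-w` path avoids `u`. -/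
theorem exists_two_kDominated_cycle_vertices {V : Type*} [Fintype V]
    (k : ℕ) (hk : 1 ≤ k) (G : SimpleGraph V) (hG : G.Connected)
    (a : V) (c : G.Walk a a) (hc : c.IsCycle) (hshort : (c.length : ℕ∞) = G.girth)
    (v : V) (hv : v ∉ c.support)
    (hdom : 2 * k ≤ ({x | x ∈ c.support ∧ G.dist v x ≤ k} : Set V).ncard) :
    ∃ u ∈ c.support, ∃ w ∈ c.support,
      G.dist v u ≤ k ∧ G.dist v w ≤ k ∧
      (∃ p : G.Walk u v, p.IsPath ∧ p.length = G.dist u v ∧ w ∉ p.support) ∧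
      (∃ q : G.Walk v w, q.IsPath ∧ q.length = G.dist v w ∧ u ∉ q.support) := by
  classical
  have hg3 : 3 ≤ c.length := hc.three_le_length
  have hgne : c.length ≠ 0 := by omega
  have hgpos : 0 < c.length := by omega
  -- minimality of the cycle length among all cycles
  have hmin : ∀ (b : V) (w : G.Walk b b), w.IsCycle → c.length ≤ w.length := by
    intro b w hw
    have h1 : G.egirth ≤ w.length := SimpleGraph.le_egirth.mp le_rfl b w hw
    have h2 : G.egirth ≤ c.length := SimpleGraph.le_egirth.mp le_rfl a c hc
    have h3 : G.egirth ≠ ⊤ := by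
      intro h
      rw [h] at h2
      exact absurd (top_le_iff.mp h2) (by simp)
    have h4 : ((G.girth : ℕ) : ℕ∞) = G.egirth := ENat.coe_toNat h3
    have h5 : (c.length : ℕ∞) = G.egirth := by rw [hshort, ← h4]
    rw [← h5] at h1
    exact_mod_cast h1
  -- index set-up
  have hLlen : c.support.tail.length = c.length := SimpleGraph.Walk.tail_support_length c
  have hLnd : c.support.tail.Nodup := hc.support_nodup
  have hmemtail : ∀ z ∈ c.support, z ∈ c.support.tail := fun z hz =>
    SimpleGraph.Walk.mem_tail_support_of_mem_support hgne hz
  have hιlt : ∀ z ∈ c.support, c.support.tail.idxOf z < c.length := fun z hz => by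
    have := List.idxOf_lt_length_iff.mpr (hmemtail z hz)
    omega
  have hιinj : ∀ z₁ ∈ c.support, ∀ z₂ ∈ c.support,
      c.support.tail.idxOf z₁ = c.support.tail.idxOf z₂ → z₁ = z₂ :=
    fun z₁ h₁ z₂ h₂ h => (List.idxOf_inj (hmemtail _ h₁)).mp h
  -- the dominated set as a Finset
  set Fs : Finset V := c.support.toFinset.filter (fun x => G.dist v x ≤ k) with hFs
  have hset : ({x | x ∈ c.support ∧ G.dist v x ≤ k} : Set V) = ↑Fs := by
    ext z
    simp [hFs, List.mem_toFinset]
  rw [hset, Set.ncard_coe_finset] at hdom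
  have hFsmem : ∀ x ∈ Fs, x ∈ c.support ∧ G.dist v x ≤ k := fun x hx => by
    rw [hFs, Finset.mem_filter, List.mem_toFinset] at hx
    exact hx
  have hFsne : Fs.Nonempty := Finset.card_pos.mp (by omega)
  obtain ⟨u, huFs, humin⟩ := Finset.exists_min_image Fs (fun x => G.dist v x) hFsne
  obtain ⟨husup, hudist⟩ := hFsmem u huFs
  have hvu : v ≠ u := fun h => hv (h ▸ husup)
  have hdistvu : 1 ≤ G.dist v u := hG.pos_dist_of_ne hvu
  obtain ⟨p₀, hp₀path, hp₀len⟩ := hG.exists_path_of_dist v u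
  have hcond1 : ∀ w, w ∈ Fs → w ≠ u → w ∉ p₀.support := by
    intro w hwFs hwu hwsup
    have h1 : (p₀.takeUntil w hwsup).length + (p₀.dropUntil w hwsup).length = p₀.length :=
      SimpleGraph.Walk.length_takeUntil_add_dropUntil p₀ hwsup
    have h2 : G.dist v w ≤ (p₀.takeUntil w hwsup).length := SimpleGraph.dist_le _
    have h3 : 1 ≤ (p₀.dropUntil w hwsup).length := by
      rcases Nat.eq_zero_or_pos (p₀.dropUntil w hwsup).length with h | h
      · exact absurd (SimpleGraph.Walk.eq_of_length_eq_zero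
          (p := p₀.dropUntil w hwsup) h) hwu
      · omega
    have h4 := humin w hwFs
    omega
  by_cases hA : ∃ w, (w ∈ Fs ∧ w ≠ u) ∧
      ∃ q : G.Walk v w, q.IsPath ∧ q.length = G.dist v w ∧ u ∉ q.support
  · obtain ⟨w, ⟨hwFs, hwu⟩, q, hq1, hq2, hq3⟩ := hA
    obtain ⟨hwsup, hwdist⟩ := hFsmem w hwFs
    refine ⟨u, husup, w, hwsup, hudist, hwdist,
      ⟨p₀.reverse, hp₀path.reverse, ?_, ?_⟩, q, hq1, hq2, hq3⟩
    · rw [SimpleGraph.Walk.length_reverse, hp₀len, SimpleGraph.dist_comm]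
    · rw [SimpleGraph.Walk.support_reverse, List.mem_reverse]
      exact hcond1 w hwFs hwu
  · push_neg at hA
    exfalso
    have hBnd : ∀ x ∈ Fs, G.dist u x ≤ k - 1 := by
      intro x hxFs
      by_cases hxu : x = u
      · subst hxu
        rw [SimpleGraph.dist_self]
        omega
      · obtain ⟨hxsup, hxdist⟩ := hFsmem x hxFs
        obtain ⟨q₀, hq₀path, hq₀len⟩ := hG.exists_path_of_dist v x
        have huq : u ∈ q₀.support := hA x ⟨hxFs, hxu⟩ q₀ hq₀path hq₀len
        have h1 : (q₀.takeUntil u huq).length + (q₀.dropUntil u huq).length = q₀.length :=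
          SimpleGraph.Walk.length_takeUntil_add_dropUntil q₀ huq
        have h2 : G.dist v u ≤ (q₀.takeUntil u huq).length := SimpleGraph.dist_le _
        have h3 : G.dist u x ≤ (q₀.dropUntil u huq).length := SimpleGraph.dist_le _
        omega
    have hnormc : ∀ x ∈ Fs,
        normc c.length ((c.support.tail.idxOf x : ℤ) - (c.support.tail.idxOf u : ℤ))
          ≤ k - 1 := by
      intro x hxFs
      obtain ⟨hxsup, _⟩ := hFsmem x hxFs
      obtain ⟨q, hqpath, hqlen⟩ := hG.exists_path_of_dist u x
      have := SimpleGraph.Walk.key_path hc hmin q.length husup hxsup q hqpath le_rfl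
      rw [hqlen] at this
      exact le_trans this (hBnd x hxFs)
    -- counting argument
    set g : ℕ := c.length with hgdef
    have hgz : (0:ℤ) < g := by exact_mod_cast hgpos
    set r : V → ℤ := fun x =>
      ((c.support.tail.idxOf x : ℤ) - (c.support.tail.idxOf u : ℤ)) % g with hrdef
    have hr0 : ∀ x, 0 ≤ r x := fun x => Int.emod_nonneg _ (by omega)
    have hrg : ∀ x, r x < g := fun x => Int.emod_lt_of_pos _ hgz
    have hcases : ∀ x ∈ Fs, (r x).toNat ≤ k - 1 ∨ (((g:ℤ) - r x).toNat ≤ k - 1 ∧ r x ≠ 0) := by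
      intro x hx
      have h := hnormc x hx
      set e : ℤ := ((c.support.tail.idxOf x : ℤ) - (c.support.tail.idxOf u : ℤ)) with hedef
      have hre : e % (g:ℤ) = r x := by rw [hrdef]
      rw [normc] at h
      by_cases h0 : r x = 0
      · left
        have := hr0 x
        omega
      · have hne := neg_emod_eq hgpos e
        rw [if_neg (by rw [hre]; exact h0)] at hne
        rw [hne, hre] at h
        rcases min_le_iff.mp h with h | h
        · left; omega
        · right; exact ⟨by omega, h0⟩
    -- the injection into a small range
    set F : V → ℕ := fun x => if (r x).toNat ≤ k - 1 then (r x).toNat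
      else ((g:ℤ) - r x).toNat + k - 1 with hFdef
    have hmaps : ∀ x ∈ Fs, F x ∈ Finset.range (2 * k - 1) := by
      intro x hx
      rw [Finset.mem_range]
      simp only [hFdef]
      split_ifs with h1
      · omega
      · rcases hcases x hx with h | h
        · omega
        · have := hr0 x
          omega
    have hval : ∀ x ∈ c.support, ((c.support.tail.idxOf x : ℤ)) =
        (r x + (c.support.tail.idxOf u : ℤ)) % g := by
      intro x hxs
      have h1 : ((c.support.tail.idxOf x : ℤ)) % g =
          (r x + (c.support.tail.idxOf u : ℤ)) % g := by
        rw [hrdef]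
        simp only
        rw [Int.emod_add_emod]
        congr 1
        ring
      calc ((c.support.tail.idxOf x : ℤ)) =
            ((c.support.tail.idxOf x : ℤ)) % g := by
              rw [Int.emod_eq_of_lt (by positivity) (by exact_mod_cast hιlt x hxs)]
        _ = _ := h1
    have hinj : Set.InjOn F ↑Fs := by
      intro x1 hx1 x2 hx2 hEq
      have hx1' := hFsmem x1 (by simpa using hx1)
      have hx2' := hFsmem x2 (by simpa using hx2)
      have hrr : r x1 = r x2 := by
        have a1 := hr0 x1
        have a2 := hr0 x2
        have b1 := hrg x1
        have b2 := hrg x2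
        simp only [hFdef] at hEq
        by_cases c1 : (r x1).toNat ≤ k - 1 <;> by_cases c2 : (r x2).toNat ≤ k - 1
        · rw [if_pos c1, if_pos c2] at hEq; omega
        · rw [if_pos c1, if_neg c2] at hEq; omega
        · rw [if_neg c1, if_pos c2] at hEq; omega
        · rw [if_neg c1, if_neg c2] at hEq; omega
      have h1 := hval x1 hx1'.1
      have h2 := hval x2 hx2'.1
      rw [hrr] at h1
      have : ((c.support.tail.idxOf x1 : ℤ)) = ((c.support.tail.idxOf x2 : ℤ)) := by
        rw [h1, h2]
      exact hιinj x1 hx1'.1 x2 hx2'.1 (by exact_mod_cast this)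
    have hcard := Finset.card_le_card_of_injOn F hmaps hinj
    rw [Finset.card_range] at hcard
    omega
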